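/- Assume 0 < μ < 1 and α, β, γ, ε > 0 with β > γ, η, η_D > 1, and σ = 1 - ε/(α(1-μ)) ∈ (0,1). Let D₂ = αμ/(β-γ), M = (σ - (η_D-η)D₂ - η)/(η-1), m = ηε/(β(η-1)). If V₂ > 0 satisfies V₂² + MV₂ + m = 0, and S₂ := 1 - V₂ - D₂ - ε/(βV₂) > 0, and V₂ + S₂ + D₂ ≤ 1, then (V₂, S₂, D₂) is an equilibrium point of the system. -/

import Mathlib

/-- Sufficiency of the algebraic conditions: if V₂ > 0 solves
V₂² + MV₂ + m = 0, S₂ := 1 - V₂ - D₂ - ε/(βV₂) > 0 and V₂ + S₂ + D₂ ≤ 1, then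
(V₂, S₂, D₂) is an equilibrium of the system. -/
theorem stmt18 (α β γ ε μ η ηD : ℝ)
    (hα : 0 < α) (hβ : 0 < β) (hγ : 0 < γ) (hε : 0 < ε)
    (hμ0 : 0 < μ) (hμ1 : μ < 1) (hη : 1 < η) (hηD : 1 < ηD) (hβγ : β > γ)
    (hσ0 : 0 < 1 - ε / (α * (1 - μ))) (hσ1 : 1 - ε / (α * (1 - μ)) < 1)
    (V₂ : ℝ) (hV : 0 < V₂) :
    let σ : ℝ := 1 - ε / (α * (1 - μ))
    let D₂ : ℝ := α * μ / (β - γ)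
    let M : ℝ := (σ - (ηD - η) * D₂ - η) / (η - 1)
    let m : ℝ := η * ε / (β * (η - 1))
    let S₂ : ℝ := 1 - V₂ - D₂ - ε / (β * V₂)
    V₂ ^ 2 + M * V₂ + m = 0 → 0 < S₂ → V₂ + S₂ + D₂ ≤ 1 →
      (α * (1 - μ) * V₂ * (1 - V₂ - η * S₂ - ηD * D₂) - ε * V₂ = 0 ∧
       β * V₂ * S₂ * (1 - V₂ - S₂ - D₂) - ε * S₂ = 0 ∧
       (α * μ + γ * D₂) * V₂ * (1 - V₂ - S₂ - D₂) - ε * D₂ = 0) := by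
  intro σ D₂ M m S₂ hquad _ _
  have hV0 : V₂ ≠ 0 := ne_of_gt hV
  have hβ0 : (β : ℝ) ≠ 0 := ne_of_gt hβ
  have hβγ0 : β - γ ≠ 0 := sub_ne_zero.mpr (ne_of_gt hβγ)
  have hη0 : η - 1 ≠ 0 := sub_ne_zero.mpr (ne_of_gt hη)
  have h1μ : 0 < 1 - μ := by linarith
  have hαμ : α * (1 - μ) ≠ 0 := (mul_pos hα h1μ).ne'
  refine ⟨?_, ?_, ?_⟩
  · simp only [σ, D₂, M, m, S₂] at hquad ⊢
    field_simp at hquad ⊢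
    have key : (η - 1) *
        (α * (1 - μ) * V₂ *
            (((1 - V₂) * ((β - γ) * (β * V₂)) -
                η * (((1 - V₂) * (β - γ) - α * μ) * (β * V₂) - (β - γ) * ε)) * (β - γ) -
              (β - γ) * (β * V₂) * (ηD * (α * μ))) -
          (β - γ) * (β * V₂) * (β - γ) * (ε * V₂)) = 0 := by
      linear_combination (V₂ * (β - γ) * (η - 1)) * hquad
    rcases mul_eq_zero.mp key with h | h
    · exact absurd h hη0
    · linarith
  · simp only [S₂, D₂]
    field_simp
    ring
  · simp only [S₂, D₂]
    field_simp
    ring
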